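/- If σ is a prefix normal word chain generator of length n, then σ(1) ≥ ⌈(n+1)/2⌉; that is, the first flipped position lies in the second half of the word. -/

import Mathlib

/-- A binary word (list of booleans, `true` = letter 1) is prefix normal if every
factor has at most as many 1s as the prefix of the same length. -/
def prefixNormal (w : List Bool) : Prop :=
  ∀ v : List Bool, v <:+: w → v.count true ≤ (w.take v.length).count true

/-- The word chain of a permutation σ of positions (0-indexed): `pnChain σ 0 = 1^n`
and `pnChain σ (k+1)` flips position `σ k` of `pnChain σ k` from 1 to 0.
(`pnChain σ k` corresponds to the paper's `c_σ[k+1]`.) -/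
def pnChain {n : ℕ} (σ : Equiv.Perm (Fin n)) : ℕ → List Bool
  | 0 => List.replicate n true
  | k + 1 => if h : k < n then (pnChain σ k).set (σ ⟨k, h⟩) false else pnChain σ k

/-- σ is a prefix normal word chain generator iff every word of its chain is prefix normal. -/
def isPNGen {n : ℕ} (σ : Equiv.Perm (Fin n)) : Prop :=
  ∀ k ≤ n, prefixNormal (pnChain σ k)

lemma set_replicate_eq (n p : ℕ) (hp : p < n) :
    (List.replicate n true).set p false
    = List.replicate p true ++ false :: List.replicate (n - p - 1) true := by
  rw [List.set_eq_take_append_cons_drop]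
  simp [hp, List.take_replicate, List.drop_replicate, Nat.min_eq_left hp.le]
  omega

lemma pn_aux (n p : ℕ) (hp : p < n) (hL : p + 1 ≤ n - p - 1)
    (key : ∀ v : List Bool, v <:+: (List.replicate n true).set p false →
      v.count true ≤ (((List.replicate n true).set p false).take v.length).count true) :
    False := by
  have h2 := key (List.replicate (n - p - 1) true)
    ⟨List.replicate p true ++ [false], [], by simp [set_replicate_eq n p hp]⟩
  rw [set_replicate_eq n p hp] at h2
  rw [List.take_append] at h2
  simp [List.count_append, List.take_replicate] at h2
  rw [List.take_cons (by omega), List.take_replicate] at h2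
  simp [List.count_cons, List.count_replicate] at h2
  omega

/-- For a prefix normal word chain generator, the first flipped position (1-indexed)
is at least ⌈(n+1)/2⌉. -/
theorem pnGen_first_flip {n : ℕ} (hn : 1 ≤ n) (σ : Equiv.Perm (Fin n)) (h : isPNGen σ) :
    (n + 2) / 2 ≤ (σ ⟨0, by omega⟩ : ℕ) + 1 := by
  set p : ℕ := (σ ⟨0, by omega⟩ : ℕ) with hpdef
  have hp : p < n := (σ ⟨0, by omega⟩).isLt
  by_contra hc
  have hL : p + 1 ≤ n - p - 1 := by omega
  have h1 := h 1 (by omega)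
  have hchain : pnChain σ 1 = (List.replicate n true).set p false := by
    have h0 : (0 : ℕ) < n := by omega
    simp [pnChain, h0, hpdef]
  rw [hchain] at h1
  exact pn_aux n p hp hL h1
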